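/- Let k1 and q1 be coprime integers with k1 > q1 ≥ 1. Then there exists a unique pair of integers (k2, q2) with 1 ≤ k2 < k1 and 0 ≤ q2 < k2 such that k1·k2 − k1·q2 − k2·q1 = 1. -/
import Mathlib


theorem stmt3 (k1 q1 : ℤ) (hcop : IsCoprime k1 q1) (hq1 : 1 ≤ q1) (hk1 : q1 < k1) :
    ∃! p : ℤ × ℤ, 1 ≤ p.1 ∧ p.1 < k1 ∧ 0 ≤ p.2 ∧ p.2 < p.1 ∧
      k1 * p.1 - k1 * p.2 - p.1 * q1 = 1 := by
  have hk1pos : 0 < k1 := by linarith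
  have hk1ne : k1 ≠ 0 := ne_of_gt hk1pos
  have hk1ge2 : (2:ℤ) ≤ k1 := by linarith
  set a := k1 - q1 with ha
  have hapos : 0 < a := by omega
  have hcop' : IsCoprime k1 a := by
    have h := (hcop.neg_right).add_mul_left_right 1
    have : -q1 + k1 * 1 = a := by ring
    rwa [this] at h
  obtain ⟨u, v, huv⟩ := hcop'
  set k2 := v % k1 with hk2
  have h0 : 0 ≤ k2 := Int.emod_nonneg v hk1ne
  have hlt : k2 < k1 := Int.emod_lt_of_pos v hk1pos
  have hdvd : k1 ∣ k2 * a - 1 := by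
    refine ⟨-(v / k1) * a - u, ?_⟩
    have hv : k2 = v - k1 * (v / k1) := by
      rw [hk2]; exact Int.emod_def v k1
    rw [hv, ← huv]; ring
  obtain ⟨q2, hq2⟩ := hdvd
  -- hq2 : k2 * a - 1 = k1 * q2
  have hk2pos : 1 ≤ k2 := by
    rcases lt_or_ge k2 1 with h | h
    · exfalso
      have hk20 : k2 = 0 := le_antisymm (by omega) h0
      rw [hk20] at hq2
      have : k1 * q2 = -1 := by linarith
      have hd : k1 ∣ (1:ℤ) := ⟨-q2, by linarith⟩
      have := Int.le_of_dvd (by norm_num) hd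
      omega
    · exact h
  have hq2nonneg : 0 ≤ q2 := by
    have h1 : 1 ≤ k2 * a := one_le_mul_of_one_le_of_one_le hk2pos hapos
    nlinarith
  have hq2lt : q2 < k2 := by nlinarith
  have heq : k1 * k2 - k1 * q2 - k2 * q1 = 1 := by
    have : k2 * a = k1 * q2 + 1 := by linarith
    rw [ha] at this; linarith [this]
  refine ⟨(k2, q2), ⟨hk2pos, hlt, hq2nonneg, hq2lt, heq⟩, ?_⟩
  rintro ⟨c, d⟩ ⟨hc1, hc2, hd1, hd2, heq'⟩
  simp only at hc1 hc2 hd1 hd2 heq'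
  -- c * a - k1 * d = 1 and k2 * a - k1 * q2 = 1
  have e1 : c * a = k1 * d + 1 := by rw [ha]; linarith
  have e2 : k2 * a = k1 * q2 + 1 := by linarith
  have hmul : k1 ∣ a * (c - k2) := ⟨d - q2, by nlinarith⟩
  have hcop2 : IsCoprime k1 a := ⟨u, v, huv⟩
  have hdvd2 : k1 ∣ (c - k2) := hcop2.dvd_of_dvd_mul_left hmul
  obtain ⟨t, ht⟩ := hdvd2
  have ht0 : t = 0 := by
    rcases lt_trichotomy t 0 with h | h | h
    · exfalso; nlinarith
    · exact h
    · exfalso; nlinarith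
  have hck : c = k2 := by rw [ht0] at ht; linarith
  have hdq : d = q2 := by
    subst hck
    have : k1 * d = k1 * q2 := by linarith
    exact mul_left_cancel₀ hk1ne this
  simp [hck, hdq]
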